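/- Let ξ₁,...,ξₙ be independent centered random variables with ξᵢ ≤ σᵢ a.s., where σᵢ² = E[ξᵢ²]. Then for all λ ≥ 0, Ψ_n(λ) = ∑ᵢ log E[e^{λξᵢ}] ≤ λ²σ²/2, where σ² = ∑ᵢ σᵢ². -/

import Mathlib

open MeasureTheory ProbabilityTheory Real


lemma coeff_pos (t : ℝ) (ht : 0 < t) :
    t ^ 2 * Real.exp (-t) ≤ Real.sinh t - t * Real.exp (-t) := by
  have hq := Real.quadratic_le_exp_of_nonneg (by linarith : (0:ℝ) ≤ 2 * t)
  have h2 : Real.exp (2 * t) = Real.exp t * Real.exp t := by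
    rw [← Real.exp_add]; ring_nf
  have he : Real.exp (-t) * Real.exp t = 1 := by rw [← Real.exp_add]; simp
  rw [Real.sinh_eq]
  nlinarith [Real.exp_pos t, Real.exp_pos (-t)]

lemma exp_le_quad {t : ℝ} (ht : 0 < t) {y : ℝ} (hy : y ≤ 1) :
    Real.exp (t * y) ≤ Real.exp (-t) + t * Real.exp (-t) * (y + 1)
      + ((Real.sinh t - t * Real.exp (-t)) / 2) * (y + 1) ^ 2 := by
  set c : ℝ := (Real.sinh t - t * Real.exp (-t)) / 2 with hc_def
  have h2c : t ^ 2 * Real.exp (-t) ≤ 2 * c := by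
    rw [hc_def]; linarith [coeff_pos t ht]
  have hcpos : 0 < c := by
    nlinarith [Real.exp_pos (-t), mul_pos (mul_pos ht ht) (Real.exp_pos (-t))]
  set d : ℝ → ℝ := fun y => Real.exp (-t) + t * Real.exp (-t) * (y + 1)
      + c * (y + 1) ^ 2 - Real.exp (t * y) with hd_def
  have hd : ∀ x : ℝ, HasDerivAt d (t * Real.exp (-t) + 2 * c * (x + 1) - t * Real.exp (t * x)) x := by
    intro x
    have h1 : HasDerivAt (fun y : ℝ => t * Real.exp (-t) * (y + 1)) (t * Real.exp (-t)) x := by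
      simpa using ((hasDerivAt_id x).add_const 1).const_mul (t * Real.exp (-t))
    have h2 : HasDerivAt (fun y : ℝ => c * (y + 1) ^ 2) (2 * c * (x + 1)) x := by
      have h := (((hasDerivAt_id x).add_const 1).pow 2).const_mul c
      simp only [id_eq] at h
      exact h.congr_deriv (by norm_num; ring)
    have h3 : HasDerivAt (fun y : ℝ => Real.exp (t * y)) (t * Real.exp (t * x)) x := by
      have h := ((hasDerivAt_id x).const_mul t).exp
      simp only [id_eq] at h
      convert h using 1; ring
    have := (((hasDerivAt_const x (Real.exp (-t))).add h1).add h2).sub h3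
    simp at this; exact this
  set d' : ℝ → ℝ := fun x => t * Real.exp (-t) + 2 * c * (x + 1) - t * Real.exp (t * x) with hd'_def
  have hderiv_d : deriv d = d' := funext fun x => (hd x).deriv
  have hd' : ∀ x : ℝ, HasDerivAt d' (2 * c - t ^ 2 * Real.exp (t * x)) x := by
    intro x
    have h1 : HasDerivAt (fun y : ℝ => 2 * c * (y + 1)) (2 * c) x := by
      simpa using ((hasDerivAt_id x).add_const 1).const_mul (2 * c)
    have h3 : HasDerivAt (fun y : ℝ => t * Real.exp (t * y)) (t ^ 2 * Real.exp (t * x)) x := by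
      have h := (((hasDerivAt_id x).const_mul t).exp).const_mul t
      simp only [id_eq] at h
      exact h.congr_deriv (by ring)
    have := ((hasDerivAt_const x (t * Real.exp (-t))).add h1).sub h3
    simp at this; exact this
  have hderiv_d' : deriv d' = fun x => 2 * c - t ^ 2 * Real.exp (t * x) :=
    funext fun x => (hd' x).deriv
  set x₀ : ℝ := Real.log (2 * c / t ^ 2) / t with hx0_def
  have ht2 : (0:ℝ) < t ^ 2 := by positivity
  have hfrac : Real.exp (-t) ≤ 2 * c / t ^ 2 := (le_div_iff₀ ht2).2 (by linarith)
  have hfracpos : 0 < 2 * c / t ^ 2 := by positivity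
  have hlog : -t ≤ Real.log (2 * c / t ^ 2) := by
    rw [← Real.exp_le_exp, Real.exp_log hfracpos]; exact hfrac
  have hx0 : -1 ≤ x₀ := by
    rw [hx0_def, le_div_iff₀ ht]; linarith
  have hsign : ∀ x : ℝ, x ≤ x₀ → t ^ 2 * Real.exp (t * x) ≤ 2 * c := by
    intro x hx
    have h1 : t * x ≤ Real.log (2 * c / t ^ 2) := by
      have : t * x ≤ t * x₀ := by nlinarith
      rw [hx0_def] at this
      calc t * x ≤ t * (Real.log (2 * c / t ^ 2) / t) := this
        _ = Real.log (2 * c / t ^ 2) := by field_simp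
    have h2 := Real.exp_le_exp.2 h1
    rw [Real.exp_log hfracpos] at h2
    calc t ^ 2 * Real.exp (t * x) ≤ t ^ 2 * (2 * c / t ^ 2) := by nlinarith
      _ = 2 * c := by field_simp
  have hsign' : ∀ x : ℝ, x₀ ≤ x → 2 * c ≤ t ^ 2 * Real.exp (t * x) := by
    intro x hx
    have h1 : Real.log (2 * c / t ^ 2) ≤ t * x := by
      have h0 : t * x₀ ≤ t * x := by nlinarith
      rw [hx0_def] at h0
      calc Real.log (2 * c / t ^ 2) = t * (Real.log (2 * c / t ^ 2) / t) := by field_simp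
        _ ≤ t * x := h0
    have h2 := Real.exp_le_exp.2 h1
    rw [Real.exp_log hfracpos] at h2
    calc 2 * c = t ^ 2 * (2 * c / t ^ 2) := by field_simp
      _ ≤ t ^ 2 * Real.exp (t * x) := by nlinarith
  have hd'mono : MonotoneOn d' (Set.Iic x₀) := by
    apply monotoneOn_of_deriv_nonneg (convex_Iic x₀)
      (fun x _ => (hd' x).continuousAt.continuousWithinAt)
      (fun x _ => (hd' x).differentiableAt.differentiableWithinAt)
    intro x hx
    rw [interior_Iic] at hx
    rw [hderiv_d']
    show 0 ≤ 2 * c - t ^ 2 * Real.exp (t * x)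
    linarith [hsign x hx.le]
  have hd'neg1 : d' (-1) = 0 := by
    show t * Real.exp (-t) + 2 * c * (-1 + 1) - t * Real.exp (t * (-1)) = 0
    rw [mul_neg_one t]; ring
  have hdneg1 : d (-1) = 0 := by
    show Real.exp (-t) + t * Real.exp (-t) * (-1 + 1) + c * (-1 + 1) ^ 2 - Real.exp (t * (-1)) = 0
    rw [mul_neg_one t]; ring
  have hd1 : d 1 = 0 := by
    show Real.exp (-t) + t * Real.exp (-t) * (1 + 1) + c * (1 + 1) ^ 2 - Real.exp (t * 1) = 0
    rw [hc_def, Real.sinh_eq, mul_one]; ring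
  have hdanti : AntitoneOn d (Set.Iic (-1 : ℝ)) := by
    apply antitoneOn_of_deriv_nonpos (convex_Iic _)
      (fun x _ => (hd x).continuousAt.continuousWithinAt)
      (fun x _ => (hd x).differentiableAt.differentiableWithinAt)
    intro x hx
    rw [interior_Iic] at hx
    rw [hderiv_d]
    have h := hd'mono (le_trans hx.le hx0) hx0 hx.le
    rw [hd'neg1] at h
    exact h
  have hdmono : MonotoneOn d (Set.Icc (-1 : ℝ) x₀) := by
    apply monotoneOn_of_deriv_nonneg (convex_Icc _ _)
      (fun x _ => (hd x).continuousAt.continuousWithinAt)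
      (fun x _ => (hd x).differentiableAt.differentiableWithinAt)
    intro x hx
    rw [interior_Icc] at hx
    rw [hderiv_d]
    have h := hd'mono (Set.mem_Iic.2 hx0 : (-1:ℝ) ∈ Set.Iic x₀)
      (Set.mem_Iic.2 hx.2.le) hx.1.le
    rw [hd'neg1] at h
    exact h
  have hgoal : 0 ≤ d y := by
    rcases le_or_gt y (-1) with h1 | h1
    · have h := hdanti (Set.mem_Iic.2 h1) (Set.mem_Iic.2 le_rfl) h1
      rw [hdneg1] at h
      exact h
    · rcases le_or_gt y x₀ with h2 | h2
      · have h := hdmono (Set.mem_Icc.2 ⟨le_refl _, hx0⟩)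
          (Set.mem_Icc.2 ⟨h1.le, h2⟩) h1.le
        rw [hdneg1] at h
        exact h
      · have hx01 : x₀ ≤ 1 := le_trans h2.le hy
        have hconc : ConcaveOn ℝ (Set.Icc x₀ 1) d := by
          apply concaveOn_of_deriv2_nonpos (convex_Icc _ _)
            (fun x _ => (hd x).continuousAt.continuousWithinAt)
            (fun x _ => (hd x).differentiableAt.differentiableWithinAt)
            (fun x _ => by
              rw [hderiv_d]; exact (hd' x).differentiableAt.differentiableWithinAt)
          intro x hx
          rw [interior_Icc] at hx
          have heq : deriv^[2] d x = deriv (deriv d) x := rfl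
          rw [heq, hderiv_d, hderiv_d']
          show 2 * c - t ^ 2 * Real.exp (t * x) ≤ 0
          linarith [hsign' x hx.1.le]
        have hdx0 : 0 ≤ d x₀ := by
          have h := hdmono (Set.mem_Icc.2 ⟨le_refl _, hx0⟩)
            (Set.mem_Icc.2 ⟨hx0, le_refl _⟩) hx0
          rw [hdneg1] at h
          exact h
        have hyseg : y ∈ segment ℝ x₀ (1:ℝ) := by
          rw [segment_eq_Icc hx01]
          exact Set.mem_Icc.2 ⟨h2.le, hy⟩
        have h := hconc.ge_on_segment (Set.mem_Icc.2 ⟨le_refl _, hx01⟩)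
          (Set.mem_Icc.2 ⟨hx01, le_refl _⟩) hyseg
        have hmin : (0:ℝ) ≤ min (d x₀) (d 1) := le_min hdx0 hd1.ge
        linarith
  have : d y = Real.exp (-t) + t * Real.exp (-t) * (y + 1) + c * (y + 1) ^ 2 - Real.exp (t * y) := rfl
  rw [this] at hgoal
  linarith

lemma single_bound {Ω : Type*} [MeasurableSpace Ω] (μ : Measure Ω) [IsProbabilityMeasure μ]
    (f : Ω → ℝ) (hm : Measurable f) (hi : Integrable f μ) (h0 : ∫ ω, f ω ∂μ = 0)
    (hi2 : Integrable (fun ω => f ω ^ 2) μ)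
    (hb : ∀ᵐ ω ∂μ, f ω ≤ Real.sqrt (∫ ω', f ω' ^ 2 ∂μ)) (l : ℝ) (hl : 0 ≤ l) :
    Real.log (∫ ω, Real.exp (l * f ω) ∂μ) ≤ l ^ 2 * (∫ ω, f ω ^ 2 ∂μ) / 2 := by
  set v := ∫ ω, f ω ^ 2 ∂μ with hv
  have hv0 : 0 ≤ v := integral_nonneg (fun ω => sq_nonneg _)
  rcases eq_or_lt_of_le hv0 with hveq | hvpos
  · -- v = 0 : f = 0 a.e.
    have hsq : (fun ω => f ω ^ 2) =ᵐ[μ] 0 :=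
      (integral_eq_zero_iff_of_nonneg_ae
        (Filter.Eventually.of_forall fun ω => sq_nonneg (f ω)) hi2).1 hveq.symm
    have hfzero : ∀ᵐ ω ∂μ, f ω = 0 := by
      filter_upwards [hsq] with ω hω
      exact pow_eq_zero_iff two_ne_zero |>.1 hω
    have hone : (fun ω => Real.exp (l * f ω)) =ᵐ[μ] fun _ => (1:ℝ) := by
      filter_upwards [hfzero] with ω hω; simp [hω]
    rw [integral_congr_ae hone]
    simp [← hveq]
  · rcases eq_or_lt_of_le hl with hleq | hlpos
    · rw [← hleq]; simp
    · set s := Real.sqrt v with hs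
      have hspos : 0 < s := Real.sqrt_pos.2 hvpos
      have hs2 : s ^ 2 = v := Real.sq_sqrt hv0
      set t := l * s with htdef
      have htpos : 0 < t := mul_pos hlpos hspos
      have hexp_int : Integrable (fun ω => Real.exp (l * f ω)) μ := by
        apply Integrable.mono' (integrable_const (Real.exp (l * s)))
          ((hm.const_mul l).exp).aestronglyMeasurable
        filter_upwards [hb] with ω hω
        rw [Real.norm_eq_abs, Real.abs_exp]
        exact Real.exp_le_exp.2 (mul_le_mul_of_nonneg_left hω hl)
      set c : ℝ := (Real.sinh t - t * Real.exp (-t)) / 2 with hc_def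
      set g : Ω → ℝ := fun ω => ((Real.exp (-t) + t * Real.exp (-t) + c)
          + (t * Real.exp (-t) / s + 2 * c / s) * f ω) + (c / s ^ 2) * f ω ^ 2 with hg_def
      have hg_int : Integrable g μ :=
        ((integrable_const _).add (hi.const_mul _)).add (hi2.const_mul _)
      have hpt : ∀ᵐ ω ∂μ, Real.exp (l * f ω) ≤ g ω := by
        filter_upwards [hb] with ω hω
        have hy : f ω / s ≤ 1 := (div_le_one hspos).2 hω
        have hq := exp_le_quad htpos hy
        have hts : t * (f ω / s) = l * f ω := by
          rw [htdef]; field_simp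
        rw [hts] at hq
        calc Real.exp (l * f ω) ≤ Real.exp (-t) + t * Real.exp (-t) * (f ω / s + 1)
              + c * (f ω / s + 1) ^ 2 := hq
          _ = g ω := by rw [hg_def]; field_simp; ring
      have hle : ∫ ω, Real.exp (l * f ω) ∂μ ≤ ∫ ω, g ω ∂μ :=
        integral_mono_ae hexp_int hg_int hpt
      have hgval : ∫ ω, g ω ∂μ = Real.cosh t := by
        have i0 : Integrable (fun ω : Ω => (t * Real.exp (-t) / s + 2 * c / s) * f ω) μ :=
          hi.const_mul _
        have i1 : Integrable (fun ω : Ω => Real.exp (-t) + t * Real.exp (-t) + c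
            + (t * Real.exp (-t) / s + 2 * c / s) * f ω) μ := (integrable_const _).add i0
        have i2 : Integrable (fun ω : Ω => (c / s ^ 2) * f ω ^ 2) μ := hi2.const_mul _
        simp only [hg_def]
        rw [integral_add i1 i2, integral_add (integrable_const _) i0,
          integral_const, integral_const_mul, integral_const_mul, h0, ← hv]
        simp only [measure_univ, ENNReal.toReal_one, probReal_univ, smul_eq_mul, one_mul, mul_zero, add_zero]
        rw [Real.cosh_eq, hc_def, Real.sinh_eq, ← hs2]
        field_simp
        ring
      have hcosh : Real.cosh t ≤ Real.exp (l ^ 2 * v / 2) := by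
        have h := Real.cosh_le_exp_half_sq t
        have : t ^ 2 / 2 = l ^ 2 * v / 2 := by rw [htdef, ← hs2]; ring
        rwa [this] at h
      rw [Real.log_le_iff_le_exp (integral_exp_pos hexp_int)]
      calc ∫ ω, Real.exp (l * f ω) ∂μ ≤ Real.cosh t := hgval ▸ hle
        _ ≤ Real.exp (l ^ 2 * v / 2) := hcosh

/-- Sub-Gaussian cumulant bound when each summand is bounded above by its own
standard deviation. -/
theorem cumulant_subgaussian_bound {Ω : Type*} [MeasurableSpace Ω] (μ : Measure Ω)
    [IsProbabilityMeasure μ] (n : ℕ) (ξ : Fin n → Ω → ℝ)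
    (hmeas : ∀ i, Measurable (ξ i))
    (hindep : iIndepFun ξ μ)
    (hint : ∀ i, Integrable (ξ i) μ) (hmean : ∀ i, ∫ ω, ξ i ω ∂μ = 0)
    (hint2 : ∀ i, Integrable (fun ω => (ξ i ω) ^ 2) μ)
    (hbdd : ∀ i, ∀ᵐ ω ∂μ, ξ i ω ≤ Real.sqrt (∫ ω', (ξ i ω') ^ 2 ∂μ)) :
    ∀ l : ℝ, 0 ≤ l →
      ∑ i, Real.log (∫ ω, Real.exp (l * ξ i ω) ∂μ)
        ≤ l ^ 2 * (∑ i, ∫ ω, (ξ i ω) ^ 2 ∂μ) / 2 := by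
  intro l hl
  calc ∑ i, Real.log (∫ ω, Real.exp (l * ξ i ω) ∂μ)
      ≤ ∑ i, l ^ 2 * (∫ ω, (ξ i ω) ^ 2 ∂μ) / 2 :=
        Finset.sum_le_sum fun i _ =>
          single_bound μ (ξ i) (hmeas i) (hint i) (hmean i) (hint2 i) (hbdd i) l hl
    _ = l ^ 2 * (∑ i, ∫ ω, (ξ i ω) ^ 2 ∂μ) / 2 := by
        rw [Finset.mul_sum, Finset.sum_div]
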